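/- arXiv:2102.10173 — 2 statements merged into one kernel-verified Lean document; each statement's English description precedes it below -/
import Mathlib

section
/- Let (b₀,b₁,…) be a sequence of integers such that p⁽ⁿ⁾ → ∞ as n → ∞, and suppose the limit continued fraction [b*₀,b*₁,…] has the same tail as [2,2,2,…] or as [−2,−2,−2,…]. Then the continued fraction [b₀,b₁,…] converges and its value is a rational number. -/
open Filter Topology OnePoint

/-- The Möbius map `z ↦ b - 1/z` on the one-point compactification `ℝ∞` of `ℝ`. -/
noncomputable def mob (b : ℤ) (z : OnePoint ℝ) : OnePoint ℝ :=
  Option.elim z ((b : ℝ) : OnePoint ℝ)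
    (fun x => if x = 0 then (∞ : OnePoint ℝ) else (((b : ℝ) - 1 / x : ℝ) : OnePoint ℝ))

/-- Value of a finite continued fraction `[b₀, …, b_m]`, i.e. `s₀(s₁(⋯ s_m(∞)))`. -/
noncomputable def cfVal : List ℤ → OnePoint ℝ
  | [] => ∞
  | b :: t => mob b (cfVal t)

/-- The `n`th convergent `v_n = S_n(∞)` of the continued fraction `[b₀, b₁, …]`. -/
noncomputable def cfConv (b : ℕ → ℤ) (n : ℕ) : OnePoint ℝ :=
  cfVal ((List.range (n + 1)).map b)

/-- `m` is a positive index at which the coefficient is `0`, `1` or `-1`. -/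
def badIdx (b : ℕ → ℤ) (m : ℕ) : Prop :=
  1 ≤ m ∧ (b m = 0 ∨ b m = 1 ∨ b m = -1)

instance (b : ℕ → ℤ) : DecidablePred (badIdx b) := fun m => by
  unfold badIdx; infer_instance

-- The singularization map `Φ` on integer sequences.
open Classical in
noncomputable def Phi (b : ℕ → ℤ) : ℕ → ℤ :=
  if h : ∃ m, badIdx b m then
    let m := Nat.find h
    if b m = 0 then
      fun k => if k + 1 < m then b k
        else if k = m - 1 then b (m - 1) + b (m + 1)
        else b (k + 2)
    else if b m = 1 then
      fun k => if k + 1 < m then b k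
        else if k = m - 1 then b (m - 1) - 1
        else if k = m then b (m + 1) - 1
        else b (k + 1)
    else
      fun k => if k + 1 < m then b k
        else if k = m - 1 then b (m - 1) + 1
        else if k = m then b (m + 1) + 1
        else b (k + 1)
  else b

-- `p(b) ∈ ℕ ∪ {∞}`: the least positive index at which `0`, `1` or `-1` occurs.
open Classical in
noncomputable def pIdx (b : ℕ → ℤ) : ℕ∞ :=
  if h : ∃ m, badIdx b m then (Nat.find h : ℕ∞) else ⊤

/-- `p⁽ⁿ⁾ → ∞` as `n → ∞`. -/
def PTendsToTop (b : ℕ → ℤ) : Prop :=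
  ∀ N : ℕ, ∃ M : ℕ, ∀ n ≥ M, (N : ℕ∞) < pIdx (Phi^[n] b)

/-- `p = liminf pⁿ`, as a natural number (junk value if the liminf is `∞`). -/
noncomputable def pLim (b : ℕ → ℤ) : ℕ :=
  (Filter.liminf (fun n => pIdx (Phi^[n] b)) Filter.atTop).toNat

/-- `q⁽ⁿ⁾ = |b⁽ⁿ⁾_{p-1}|`. -/
noncomputable def qSeq (b : ℕ → ℤ) (n : ℕ) : ℕ :=
  ((Phi^[n] b) (pLim b - 1)).natAbs

/-- Two continued fractions have the same tail. -/
def SameTail (b c : ℕ → ℤ) : Prop := ∃ r s : ℕ, ∀ k : ℕ, b (r + k) = c (s + k)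

/-- `bstar` is the limit continued fraction: each coefficient of `Φⁿ(b)` stabilises on it. -/
def EventuallyCoeff (b bstar : ℕ → ℤ) : Prop :=
  ∀ k : ℕ, ∃ N : ℕ, ∀ n ≥ N, Phi^[n] b k = bstar k

/-- The point of `ℝ∞` represented by the integer fraction `a/b` (`∞` when `b = 0`). -/
noncomputable def intPt (a b : ℤ) : OnePoint ℝ :=
  if b = 0 then ∞ else (((a : ℝ) / (b : ℝ)) : OnePoint ℝ)

/-- Adjacency in the Farey graph: `x = a/b`, `y = c/d` with `ad - bc = ±1`. -/
def FareyAdj (x y : OnePoint ℝ) : Prop :=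
  ∃ a b c d : ℤ, x = intPt a b ∧ y = intPt c d ∧
    (a * d - b * c = 1 ∨ a * d - b * c = -1)

/-- `x` is an extended rational, i.e. a member of `ℚ∞ = ℚ ∪ {∞} ⊆ ℝ∞`. -/
def IsExtRat (x : OnePoint ℝ) : Prop :=
  x = ∞ ∨ ∃ q : ℚ, x = ((q : ℝ) : OnePoint ℝ)

-- One step of the index-tracking sequence, for the current coefficient sequence `c`.
open Classical in
noncomputable def eStep (c : ℕ → ℤ) (e : ℕ) : Option ℕ :=
  if h : ∃ m, badIdx c m then
    let m := Nat.find h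
    if c m = 0 then
      if e + 2 ≤ m then Option.some e
      else if e = m - 1 ∨ e = m then (none : Option ℕ)
      else Option.some (e - 2)
    else
      if e + 2 ≤ m then Option.some e
      else if e = m - 1 then (none : Option ℕ)
      else Option.some (e - 1)
  else Option.some e

/-- The index-tracking sequence `e⁽⁰⁾(k), e⁽¹⁾(k), …` (`none` once it has terminated). -/
noncomputable def eSeq (b : ℕ → ℤ) (k : ℕ) : ℕ → Option ℕ
  | 0 => Option.some k
  | n + 1 => (eSeq b k n).bind (eStep (Phi^[n] b))

-- test basics
open Filter Topology OnePoint

noncomputable def tv : (ℕ → ℤ) → ℕ → OnePoint ℝ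
  | _, 0 => ∞
  | g, (k+1) => mob (g 0) (tv (fun j => g (j+1)) k)

noncomputable def applyMob : (ℕ → ℤ) → ℕ → OnePoint ℝ → OnePoint ℝ
  | _, 0, z => z
  | g, (a+1), z => mob (g 0) (applyMob (fun j => g (j+1)) a z)

lemma mob_infty (b : ℤ) : mob b ∞ = (((b:ℝ)) : OnePoint ℝ) := rfl

lemma mob_coe (b : ℤ) (x : ℝ) (hx : x ≠ 0) :
    mob b ((x : ℝ) : OnePoint ℝ) = (((b : ℝ) - 1/x : ℝ) : OnePoint ℝ) := by
  simp [mob, OnePoint.some, hx, Option.elim]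
  rfl

lemma mob_coe_zero (b : ℤ) : mob b (((0:ℝ)) : OnePoint ℝ) = ∞ := by
  simp [mob, OnePoint.some, Option.elim]

lemma cfVal_range : ∀ (k : ℕ) (g : ℕ → ℤ), cfVal ((List.range k).map g) = tv g k := by
  intro k
  induction k with
  | zero => intro g; rfl
  | succ k ih =>
    intro g
    rw [List.range_succ_eq_map]
    simp only [List.map_cons, List.map_map, cfVal, tv]
    rw [show (g ∘ Nat.succ) = (fun j => g (j+1)) from rfl, ih]

lemma cfConv_eq_tv (c : ℕ → ℤ) (n : ℕ) : cfConv c n = tv c (n+1) := cfVal_range (n+1) c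
lemma tv_congr : ∀ (n : ℕ) (g g' : ℕ → ℤ), (∀ k < n, g k = g' k) → tv g n = tv g' n := by
  intro n
  induction n with
  | zero => intros; rfl
  | succ n ih =>
    intro g g' hgg
    simp only [tv]
    rw [hgg 0 (Nat.succ_pos n), ih _ _ (fun k hk => hgg (k+1) (by omega))]

lemma applyMob_congr : ∀ (a : ℕ) (g g' : ℕ → ℤ) (z : OnePoint ℝ),
    (∀ k < a, g k = g' k) → applyMob g a z = applyMob g' a z := by
  intro a
  induction a with
  | zero => intros; rfl
  | succ a ih =>
    intro g g' z hgg
    simp only [applyMob]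
    rw [hgg 0 (Nat.succ_pos a), ih _ _ _ (fun k hk => hgg (k+1) (by omega))]

lemma tv_add : ∀ (a : ℕ) (g : ℕ → ℤ) (b : ℕ),
    tv g (a + b) = applyMob g a (tv (fun j => g (a + j)) b) := by
  intro a
  induction a with
  | zero => intro g b; simp only [Nat.zero_add, applyMob]
  | succ a ih =>
    intro g b
    have : a + 1 + b = (a + b) + 1 := by omega
    rw [this]
    simp only [tv, applyMob]
    rw [ih (fun j => g (j+1)) b]
    congr 1
    congr 1
    exact tv_congr b _ _ (fun k hk => by congr 1 <;> omega)

lemma applyMob_add : ∀ (a : ℕ) (g : ℕ → ℤ) (b : ℕ) (z : OnePoint ℝ),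
    applyMob g (a + b) z = applyMob g a (applyMob (fun j => g (a + j)) b z) := by
  intro a
  induction a with
  | zero => intro g b z; simp only [Nat.zero_add, applyMob]
  | succ a ih =>
    intro g b z
    have : a + 1 + b = (a + b) + 1 := by omega
    rw [this]
    simp only [applyMob]
    rw [ih (fun j => g (j+1)) b]
    congr 1
    congr 1
    exact applyMob_congr b _ _ z (fun k hk => by congr 1 <;> omega)

def KK : Set (OnePoint ℝ) := {z | z = ∞ ∨ ∃ x : ℝ, z = ((x:ℝ) : OnePoint ℝ) ∧ 1 ≤ |x|}

lemma infty_mem_KK : (∞ : OnePoint ℝ) ∈ KK := Or.inl rfl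

lemma mob_mem_KK {b : ℤ} (hb : 2 ≤ |b|) {z : OnePoint ℝ} (hz : z ∈ KK) : mob b z ∈ KK := by
  have hb' : (2:ℝ) ≤ |(b:ℝ)| := by rw [← Int.cast_abs]; exact_mod_cast hb
  rcases hz with h | ⟨x, rfl, hx⟩
  · subst h
    exact Or.inr ⟨(b:ℝ), rfl, by linarith⟩
  · have hx0 : x ≠ 0 := by intro h; rw [h, abs_zero] at hx; linarith
    rw [mob_coe b x hx0]
    refine Or.inr ⟨_, rfl, ?_⟩
    have h1 : |1/x| ≤ 1 := by
      rw [abs_div, abs_one, div_le_one (by positivity)]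
      exact hx
    calc (1:ℝ) ≤ |(b:ℝ)| - |1/x| := by linarith
    _ ≤ |(b:ℝ) - 1/x| := by exact abs_sub_abs_le_abs_sub _ _
lemma onePoint_cases (z : OnePoint ℝ) : z = ∞ ∨ ∃ x : ℝ, z = ((x:ℝ) : OnePoint ℝ) := by
  cases z with
  | infty => exact Or.inl rfl
  | coe x => exact Or.inr ⟨x, rfl⟩

lemma tv_mem_KK {g : ℕ → ℤ} {n : ℕ} (h : ∀ k < n, 2 ≤ |g k|) : tv g n ∈ KK := by
  induction n generalizing g with
  | zero => exact infty_mem_KK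
  | succ n ih =>
    exact mob_mem_KK (h 0 (Nat.succ_pos n)) (ih (fun k hk => h (k+1) (by omega)))

lemma applyMob_mem_KK {g : ℕ → ℤ} {a : ℕ} {z : OnePoint ℝ} (h : ∀ k < a, 2 ≤ |g k|)
    (hz : z ∈ KK) : applyMob g a z ∈ KK := by
  induction a generalizing g z with
  | zero => exact hz
  | succ a ih =>
    exact mob_mem_KK (h 0 (Nat.succ_pos a)) (ih (fun k hk => h (k+1) (by omega)) hz)

noncomputable def rmob (B : ℝ) (z : OnePoint ℝ) : OnePoint ℝ :=
  Option.elim z ((B : ℝ) : OnePoint ℝ)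
    (fun x => if x = 0 then (∞ : OnePoint ℝ) else (((B : ℝ) - 1 / x : ℝ) : OnePoint ℝ))

lemma mob_eq_rmob (b : ℤ) (z : OnePoint ℝ) : mob b z = rmob (b:ℝ) z := rfl

lemma rmob_infty (B : ℝ) : rmob B ∞ = ((B:ℝ) : OnePoint ℝ) := rfl

lemma rmob_coe (B : ℝ) {x : ℝ} (hx : x ≠ 0) :
    rmob B ((x:ℝ) : OnePoint ℝ) = ((B - 1/x : ℝ) : OnePoint ℝ) := by
  have h : rmob B ((x:ℝ) : OnePoint ℝ)
      = if x = 0 then (∞ : OnePoint ℝ) else ((B - 1/x : ℝ) : OnePoint ℝ) := rfl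
  rw [h, if_neg hx]

lemma rmob_zero (B : ℝ) : rmob B (((0:ℝ)) : OnePoint ℝ) = ∞ := by
  have h : rmob B (((0:ℝ)) : OnePoint ℝ)
      = if (0:ℝ) = 0 then (∞ : OnePoint ℝ) else ((B - 1/(0:ℝ) : ℝ) : OnePoint ℝ) := rfl
  rw [h, if_pos rfl]

lemma zero_sub_inv_ne {u : ℝ} (hu : u ≠ 0) : (0:ℝ) - 1/u ≠ 0 := by
  rw [zero_sub, ne_eq, neg_eq_zero, div_eq_zero_iff]
  push_neg
  exact ⟨one_ne_zero, hu⟩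

lemma rmob_id0 (A D : ℝ) (z : OnePoint ℝ) : rmob A (rmob 0 (rmob D z)) = rmob (A + D) z := by
  rcases onePoint_cases z with rfl | ⟨x, rfl⟩
  · rw [rmob_infty, rmob_infty]
    by_cases hd : D = 0
    · rw [hd, rmob_zero, rmob_infty, add_zero]
    · rw [rmob_coe 0 hd, rmob_coe A (zero_sub_inv_ne hd), OnePoint.coe_eq_coe,
        zero_sub, div_neg, one_div_one_div]
      ring
  · by_cases hx : x = 0
    · rw [hx, rmob_zero, rmob_infty, rmob_zero, rmob_zero]
    · rw [rmob_coe D hx]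
      by_cases h2 : D - 1/x = 0
      · rw [h2, rmob_zero, rmob_infty, rmob_coe (A+D) hx, OnePoint.coe_eq_coe]
        linarith
      · rw [rmob_coe 0 h2, rmob_coe A (zero_sub_inv_ne h2), rmob_coe (A+D) hx,
          OnePoint.coe_eq_coe, zero_sub, div_neg, one_div_one_div]
        ring

lemma rmob_id1 (A D : ℝ) (z : OnePoint ℝ) :
    rmob A (rmob 1 (rmob D z)) = rmob (A - 1) (rmob (D - 1) z) := by
  rcases onePoint_cases z with rfl | ⟨x, rfl⟩
  · rw [rmob_infty, rmob_infty]
    by_cases hd : D = 0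
    · subst hd
      rw [rmob_zero, rmob_infty, rmob_coe (A-1) (by norm_num : (0:ℝ)-1 ≠ 0),
        OnePoint.coe_eq_coe]
      norm_num
    · rw [rmob_coe 1 hd]
      by_cases h2 : 1 - 1/D = 0
      · have hD1 : D = 1 := by field_simp at h2; linarith
        rw [h2, rmob_zero, hD1, sub_self, rmob_zero]
      · have hD1 : D - 1 ≠ 0 := by
          intro h
          apply h2
          rw [show D = 1 by linarith]
          norm_num
        rw [rmob_coe A h2, rmob_coe (A-1) hD1, OnePoint.coe_eq_coe]
        field_simp
        ring
  · by_cases hx : x = 0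
    · rw [hx, rmob_zero, rmob_infty, rmob_zero, rmob_infty,
        rmob_coe A (by norm_num : (1:ℝ) ≠ 0), OnePoint.coe_eq_coe]
      norm_num
    · rw [rmob_coe D hx]
      by_cases h2 : D - 1/x = 0
      · rw [h2, rmob_zero, rmob_infty, rmob_coe (D-1) hx,
          show D - 1 - 1/x = -1 by linarith,
          rmob_coe (A-1) (by norm_num : (-1:ℝ) ≠ 0), OnePoint.coe_eq_coe]
        norm_num
      · rw [rmob_coe 1 h2]
        by_cases h3 : 1 - 1/(D - 1/x) = 0
        · have hu1 : D - 1/x = 1 := by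
            have h6 : (1 - 1/(D - 1/x)) * (D - 1/x) = 0 := by rw [h3]; ring
            rw [sub_mul, one_mul, div_mul_cancel₀ _ h2] at h6
            linarith
          rw [h3, rmob_zero, rmob_coe (D-1) hx, show D - 1 - 1/x = 0 by linarith, rmob_zero]
        · have h4 : D - 1 - 1/x ≠ 0 := by
            intro h
            apply h3
            rw [show D - 1/x = 1 by linarith]
            norm_num
          rw [rmob_coe A h3, rmob_coe (D-1) hx, rmob_coe (A-1) h4, OnePoint.coe_eq_coe,
            show D - 1 - 1/x = (D - 1/x) - 1 by ring]
          have hu0 : D - 1/x ≠ 0 := h2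
          have hu1 : D - 1/x - 1 ≠ 0 := by
            intro h
            apply h3
            rw [show D - 1/x = 1 by linarith]
            norm_num
          generalize hg : D - 1/x = u at h3 hu0 hu1 ⊢
          field_simp
          ring

lemma rmob_idm1 (A D : ℝ) (z : OnePoint ℝ) :
    rmob A (rmob (-1) (rmob D z)) = rmob (A + 1) (rmob (D + 1) z) := by
  rcases onePoint_cases z with rfl | ⟨x, rfl⟩
  · rw [rmob_infty, rmob_infty]
    by_cases hd : D = 0
    · subst hd
      rw [rmob_zero, rmob_infty, rmob_coe (A+1) (by norm_num : (0:ℝ)+1 ≠ 0),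
        OnePoint.coe_eq_coe]
      norm_num
    · rw [rmob_coe (-1) hd]
      by_cases h2 : -1 - 1/D = 0
      · have hD1 : D = -1 := by field_simp at h2; linarith
        rw [h2, rmob_zero, hD1, show (-1:ℝ) + 1 = 0 by norm_num, rmob_zero]
      · have hD1 : D + 1 ≠ 0 := by
          intro h
          apply h2
          rw [show D = -1 by linarith]
          norm_num
        rw [rmob_coe A h2, rmob_coe (A+1) hD1, OnePoint.coe_eq_coe]
        have hD2 : -1 - D ≠ 0 := by intro h; apply hD1; linarith
        field_simp [hD2]
        linear_combination D * mul_inv_cancel₀ hD2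
  · by_cases hx : x = 0
    · rw [hx, rmob_zero, rmob_infty, rmob_zero, rmob_infty,
        rmob_coe A (by norm_num : (-1:ℝ) ≠ 0), OnePoint.coe_eq_coe]
      norm_num
    · rw [rmob_coe D hx]
      by_cases h2 : D - 1/x = 0
      · rw [h2, rmob_zero, rmob_infty, rmob_coe (D+1) hx,
          show D + 1 - 1/x = 1 by linarith,
          rmob_coe (A+1) (by norm_num : (1:ℝ) ≠ 0), OnePoint.coe_eq_coe]
        norm_num
      · rw [rmob_coe (-1) h2]
        by_cases h3 : -1 - 1/(D - 1/x) = 0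
        · have hu1 : D - 1/x = -1 := by
            have h6 : (-1 - 1/(D - 1/x)) * (D - 1/x) = 0 := by rw [h3]; ring
            rw [sub_mul, div_mul_cancel₀ _ h2] at h6
            have : -(D - 1/x) - 1 = 0 := by linarith [h6]
            linarith
          rw [h3, rmob_zero, rmob_coe (D+1) hx, show D + 1 - 1/x = 0 by linarith, rmob_zero]
        · have h4 : D + 1 - 1/x ≠ 0 := by
            intro h
            apply h3
            rw [show D - 1/x = -1 by linarith]
            norm_num
          rw [rmob_coe A h3, rmob_coe (D+1) hx, rmob_coe (A+1) h4, OnePoint.coe_eq_coe,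
            show D + 1 - 1/x = (D - 1/x) + 1 by ring]
          have hu0 : D - 1/x ≠ 0 := h2
          have hu1 : D - 1/x + 1 ≠ 0 := by
            intro h
            apply h3
            rw [show D - 1/x = -1 by linarith]
            norm_num
          generalize hg : D - 1/x = u at h3 hu0 hu1 ⊢
          have hu2 : -1 - u ≠ 0 := by intro h; apply hu1; linarith
          field_simp [hu2]
          linear_combination u * mul_inv_cancel₀ hu2
lemma mob_id0' (a d : ℤ) (z : OnePoint ℝ) : mob a (mob 0 (mob d z)) = mob (a + d) z := by
  simp only [mob_eq_rmob]
  rw [show (((0:ℤ)):ℝ) = (0:ℝ) by norm_num, show (((a+d:ℤ)):ℝ) = (a:ℝ)+(d:ℝ) by push_cast; ring]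
  exact rmob_id0 _ _ z

lemma mob_id1' (a d : ℤ) (z : OnePoint ℝ) :
    mob a (mob 1 (mob d z)) = mob (a - 1) (mob (d - 1) z) := by
  simp only [mob_eq_rmob]
  rw [show (((1:ℤ)):ℝ) = (1:ℝ) by norm_num, show (((a-1:ℤ)):ℝ) = (a:ℝ)-1 by push_cast; ring,
    show (((d-1:ℤ)):ℝ) = (d:ℝ)-1 by push_cast; ring]
  exact rmob_id1 _ _ z

lemma mob_idm1' (a d : ℤ) (z : OnePoint ℝ) :
    mob a (mob (-1) (mob d z)) = mob (a + 1) (mob (d + 1) z) := by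
  simp only [mob_eq_rmob]
  rw [show (((-1:ℤ)):ℝ) = (-1:ℝ) by norm_num, show (((a+1:ℤ)):ℝ) = (a:ℝ)+1 by push_cast; ring,
    show (((d+1:ℤ)):ℝ) = (d:ℝ)+1 by push_cast; ring]
  exact rmob_idm1 _ _ z

section PhiLemmas

variable {c : ℕ → ℤ}

lemma good_of_not_bad {k : ℕ} (h1 : 1 ≤ k) (h2 : ¬ badIdx c k) : 2 ≤ |c k| := by
  unfold badIdx at h2
  push_neg at h2
  have h3 := h2 h1
  rw [le_abs]
  omega

lemma Phi_eq_of_lt (h : ∃ m, badIdx c m) {k : ℕ} (hk : k + 1 < Nat.find h) :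
    Phi c k = c k := by
  simp only [Phi, dif_pos h]
  split_ifs <;> simp [hk]

end PhiLemmas

section PhiLemmas2

variable {c : ℕ → ℤ}

lemma Phi_nobad (h : ¬ ∃ m, badIdx c m) : Phi c = c := dif_neg h

lemma Phi_eq0_mid (h : ∃ m, badIdx c m) (h0 : c (Nat.find h) = 0) :
    Phi c (Nat.find h - 1) = c (Nat.find h - 1) + c (Nat.find h + 1) := by
  simp only [Phi, dif_pos h, h0, if_true]
  simp [show ¬(Nat.find h - 1 + 1 < Nat.find h) by omega]

lemma Phi_eq0_high (h : ∃ m, badIdx c m) (h0 : c (Nat.find h) = 0) {k : ℕ}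
    (hk : Nat.find h ≤ k) : Phi c k = c (k + 2) := by
  have hm1 : 1 ≤ Nat.find h := (Nat.find_spec h).1
  simp only [Phi, dif_pos h, h0, if_true]
  simp [show ¬(k + 1 < Nat.find h) by omega, show ¬(k = Nat.find h - 1) by omega]

lemma Phi_eq1_mid (h : ∃ m, badIdx c m) (h1 : c (Nat.find h) = 1) :
    Phi c (Nat.find h - 1) = c (Nat.find h - 1) - 1 := by
  simp only [Phi, dif_pos h]
  rw [if_neg (show ¬ c (Nat.find h) = 0 by rw [h1]; norm_num), if_pos h1]
  simp [show ¬(Nat.find h - 1 + 1 < Nat.find h) by omega]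

lemma Phi_eq1_at (h : ∃ m, badIdx c m) (h1 : c (Nat.find h) = 1) :
    Phi c (Nat.find h) = c (Nat.find h + 1) - 1 := by
  have hm1 : 1 ≤ Nat.find h := (Nat.find_spec h).1
  simp only [Phi, dif_pos h]
  rw [if_neg (show ¬ c (Nat.find h) = 0 by rw [h1]; norm_num), if_pos h1]
  simp [show ¬(Nat.find h + 1 < Nat.find h) by omega, show ¬(Nat.find h = Nat.find h - 1) by omega]

lemma Phi_eq1_high (h : ∃ m, badIdx c m) (h1 : c (Nat.find h) = 1) {k : ℕ}
    (hk : Nat.find h + 1 ≤ k) : Phi c k = c (k + 1) := by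
  have hm1 : 1 ≤ Nat.find h := (Nat.find_spec h).1
  simp only [Phi, dif_pos h]
  rw [if_neg (show ¬ c (Nat.find h) = 0 by rw [h1]; norm_num), if_pos h1]
  simp [show ¬(k + 1 < Nat.find h) by omega, show ¬(k = Nat.find h - 1) by omega,
    show ¬(k = Nat.find h) by omega]

lemma Phi_eqm1_mid (h : ∃ m, badIdx c m) (h1 : c (Nat.find h) = -1) :
    Phi c (Nat.find h - 1) = c (Nat.find h - 1) + 1 := by
  simp only [Phi, dif_pos h]
  rw [if_neg (show ¬ c (Nat.find h) = 0 by rw [h1]; norm_num),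
    if_neg (show ¬ c (Nat.find h) = 1 by rw [h1]; norm_num)]
  simp [show ¬(Nat.find h - 1 + 1 < Nat.find h) by omega]

lemma Phi_eqm1_at (h : ∃ m, badIdx c m) (h1 : c (Nat.find h) = -1) :
    Phi c (Nat.find h) = c (Nat.find h + 1) + 1 := by
  have hm1 : 1 ≤ Nat.find h := (Nat.find_spec h).1
  simp only [Phi, dif_pos h]
  rw [if_neg (show ¬ c (Nat.find h) = 0 by rw [h1]; norm_num),
    if_neg (show ¬ c (Nat.find h) = 1 by rw [h1]; norm_num)]
  simp [show ¬(Nat.find h + 1 < Nat.find h) by omega, show ¬(Nat.find h = Nat.find h - 1) by omega]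

lemma Phi_eqm1_high (h : ∃ m, badIdx c m) (h1 : c (Nat.find h) = -1) {k : ℕ}
    (hk : Nat.find h + 1 ≤ k) : Phi c k = c (k + 1) := by
  have hm1 : 1 ≤ Nat.find h := (Nat.find_spec h).1
  simp only [Phi, dif_pos h]
  rw [if_neg (show ¬ c (Nat.find h) = 0 by rw [h1]; norm_num),
    if_neg (show ¬ c (Nat.find h) = 1 by rw [h1]; norm_num)]
  simp [show ¬(k + 1 < Nat.find h) by omega, show ¬(k = Nat.find h - 1) by omega,
    show ¬(k = Nat.find h) by omega]

end PhiLemmas2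
section EStepLemmas

variable {c : ℕ → ℤ}

lemma eStep_nobad (h : ¬ ∃ m, badIdx c m) (e : ℕ) : eStep c e = Option.some e := by
  simp only [eStep, dif_neg h]

lemma eStep_small (h : ∃ m, badIdx c m) {e : ℕ} (he : e + 2 ≤ Nat.find h) :
    eStep c e = Option.some e := by
  simp only [eStep, dif_pos h]
  split_ifs with h0 <;> simp [he]

lemma eStep0_none (h : ∃ m, badIdx c m) (h0 : c (Nat.find h) = 0) {e : ℕ}
    (he : ¬ e + 2 ≤ Nat.find h) (he2 : e = Nat.find h - 1 ∨ e = Nat.find h) :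
    eStep c e = none := by
  simp only [eStep, dif_pos h, if_pos h0]
  rw [if_neg he, if_pos he2]

lemma eStep0_some (h : ∃ m, badIdx c m) (h0 : c (Nat.find h) = 0) {e : ℕ}
    (he : ¬ e + 2 ≤ Nat.find h) (he2 : ¬(e = Nat.find h - 1 ∨ e = Nat.find h)) :
    eStep c e = Option.some (e - 2) := by
  simp only [eStep, dif_pos h, if_pos h0]
  rw [if_neg he, if_neg he2]

lemma eStep1_none (h : ∃ m, badIdx c m) (h0 : ¬ c (Nat.find h) = 0) {e : ℕ}
    (he : ¬ e + 2 ≤ Nat.find h) (he2 : e = Nat.find h - 1) :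
    eStep c e = none := by
  simp only [eStep, dif_pos h, if_neg h0]
  rw [if_neg he, if_pos he2]

lemma eStep1_some (h : ∃ m, badIdx c m) (h0 : ¬ c (Nat.find h) = 0) {e : ℕ}
    (he : ¬ e + 2 ≤ Nat.find h) (he2 : ¬ e = Nat.find h - 1) :
    eStep c e = Option.some (e - 1) := by
  simp only [eStep, dif_pos h, if_neg h0]
  rw [if_neg he, if_neg he2]

end EStepLemmas

lemma tv_succ (g : ℕ → ℤ) (k : ℕ) : tv g (k+1) = mob (g 0) (tv (fun j => g (j+1)) k) := rfl

lemma tv_shift_succ (c : ℕ → ℤ) (i k : ℕ) :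
    tv (fun j => c (i + j)) (k+1) = mob (c i) (tv (fun j => c ((i+1) + j)) k) := by
  rw [tv_succ]
  simp only [Nat.add_zero]
  exact congrArg (mob (c i)) (tv_congr _ _ _ fun k hk => by congr 1; omega)
theorem step_main {c : ℕ → ℤ} {e e' : ℕ} (hs : eStep c e = Option.some e') :
    cfConv c e = cfConv (Phi c) e' := by
  by_cases h : ∃ m, badIdx c m
  · have hm1 : 1 ≤ Nat.find h := (Nat.find_spec h).1
    set m := Nat.find h with hm
    by_cases hsm : e + 2 ≤ m
    · rw [eStep_small h hsm] at hs
      injection hs with hs'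
      subst hs'
      rw [cfConv_eq_tv, cfConv_eq_tv]
      exact (tv_congr _ _ _ fun k hk => (Phi_eq_of_lt h (by omega)).symm)
    · by_cases h0 : c m = 0
      · have he2 : ¬(e = m - 1 ∨ e = m) := by
          intro hor
          rw [eStep0_none h h0 hsm hor] at hs
          exact nomatch hs
        rw [eStep0_some h h0 hsm he2] at hs
        injection hs with hs'
        subst hs'
        have hem : m + 1 ≤ e := by omega
        set t := e - m - 1 with ht
        rw [cfConv_eq_tv, cfConv_eq_tv]
        rw [show e + 1 = (m - 1) + (t+1+1+1) by omega, tv_add (m-1) c (t+1+1+1)]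
        rw [show e - 2 + 1 = (m - 1) + (t+1) by omega, tv_add (m-1) (Phi c) (t+1)]
        rw [applyMob_congr (m-1) (Phi c) c _ (fun k hk => Phi_eq_of_lt h (by omega))]
        apply congrArg (applyMob c (m-1))
        have L1 : tv (fun j => c ((m-1) + j)) (t+1+1+1)
            = mob (c (m-1)) (mob (c m) (mob (c (m+1)) (tv (fun j => c ((m+2) + j)) t))) := by
          rw [tv_shift_succ, show m - 1 + 1 = m by omega, tv_shift_succ, tv_shift_succ,
            show m + 1 + 1 = m + 2 by omega]
        have R1 : tv (fun j => Phi c ((m-1) + j)) (t+1)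
            = mob (c (m-1) + c (m+1)) (tv (fun j => c ((m+2) + j)) t) := by
          rw [tv_shift_succ (Phi c) (m-1) t, Phi_eq0_mid h h0]
          apply congrArg
          apply tv_congr
          intro k hk
          rw [show m - 1 + 1 + k = m + k by omega, Phi_eq0_high h h0 (Nat.le_add_right m k)]
          congr 1
          omega
        rw [L1, R1, h0, mob_id0']
      · have he2 : ¬ e = m - 1 := by
          intro hor
          rw [eStep1_none h h0 hsm hor] at hs
          exact nomatch hs
        rw [eStep1_some h h0 hsm he2] at hs
        injection hs with hs'
        subst hs'
        have hem : m ≤ e := by omega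
        rw [cfConv_eq_tv, cfConv_eq_tv]
        rcases eq_or_lt_of_le hem with heq | hgt
        · -- e = m
          rw [show e + 1 = (m-1) + (1+1) by omega, tv_add (m-1) c (1+1)]
          rw [show e - 1 + 1 = (m-1) + 1 by omega, tv_add (m-1) (Phi c) 1]
          rw [applyMob_congr (m-1) (Phi c) c _ (fun k hk => Phi_eq_of_lt h (by omega))]
          apply congrArg (applyMob c (m-1))
          have L1 : tv (fun j => c ((m-1) + j)) (1+1)
              = mob (c (m-1)) (mob (c m) ∞) := by
            rw [tv_shift_succ, show m - 1 + 1 = m by omega, tv_shift_succ]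
            rfl
          have R1 : tv (fun j => Phi c ((m-1) + j)) 1
              = mob (Phi c (m-1)) ∞ := by
            rw [tv_shift_succ (Phi c) (m-1) 0]
            rfl
          rw [L1, R1]
          rcases (Nat.find_spec h).2 with h0' | h1 | h1
          · exact absurd h0' h0
          · rw [← hm] at h1
            rw [h1, Phi_eq1_mid h h1]
            rw [mob_eq_rmob, mob_eq_rmob, mob_eq_rmob, rmob_infty, rmob_infty,
              show (((1:ℤ)):ℝ) = (1:ℝ) by norm_num,
              rmob_coe _ (by norm_num : (1:ℝ) ≠ 0), OnePoint.coe_eq_coe]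
            push_cast
            ring
          · rw [← hm] at h1
            rw [h1, Phi_eqm1_mid h h1]
            rw [mob_eq_rmob, mob_eq_rmob, mob_eq_rmob, rmob_infty, rmob_infty,
              show (((-1:ℤ)):ℝ) = (-1:ℝ) by norm_num,
              rmob_coe _ (by norm_num : (-1:ℝ) ≠ 0), OnePoint.coe_eq_coe]
            push_cast
            ring
        · -- e ≥ m + 1
          have hem1 : m + 1 ≤ e := hgt
          set t := e - m - 1 with ht
          rw [show e + 1 = (m-1) + (t+1+1+1) by omega, tv_add (m-1) c (t+1+1+1)]
          rw [show e - 1 + 1 = (m-1) + (t+1+1) by omega, tv_add (m-1) (Phi c) (t+1+1)]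
          rw [applyMob_congr (m-1) (Phi c) c _ (fun k hk => Phi_eq_of_lt h (by omega))]
          apply congrArg (applyMob c (m-1))
          have L1 : tv (fun j => c ((m-1) + j)) (t+1+1+1)
              = mob (c (m-1)) (mob (c m) (mob (c (m+1)) (tv (fun j => c ((m+2) + j)) t))) := by
            rw [tv_shift_succ, show m - 1 + 1 = m by omega, tv_shift_succ, tv_shift_succ,
              show m + 1 + 1 = m + 2 by omega]
          rw [L1]
          rcases (Nat.find_spec h).2 with h0' | h1 | h1
          · exact absurd h0' h0
          · rw [← hm] at h1
            have R1 : tv (fun j => Phi c ((m-1) + j)) (t+1+1)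
                = mob (c (m-1) - 1) (mob (c (m+1) - 1) (tv (fun j => c ((m+2) + j)) t)) := by
              rw [tv_shift_succ (Phi c) (m-1) (t+1), Phi_eq1_mid h h1,
                show m - 1 + 1 = m by omega, tv_shift_succ (Phi c) m t, Phi_eq1_at h h1]
              apply congrArg
              apply congrArg
              apply tv_congr
              intro k hk
              rw [show m + 1 + k = (m + 1) + k by omega,
                Phi_eq1_high h h1 (Nat.le_add_right (m+1) k)]
              congr 1
              omega
            rw [R1, h1, mob_id1']
          · rw [← hm] at h1
            have R1 : tv (fun j => Phi c ((m-1) + j)) (t+1+1)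
                = mob (c (m-1) + 1) (mob (c (m+1) + 1) (tv (fun j => c ((m+2) + j)) t)) := by
              rw [tv_shift_succ (Phi c) (m-1) (t+1), Phi_eqm1_mid h h1,
                show m - 1 + 1 = m by omega, tv_shift_succ (Phi c) m t, Phi_eqm1_at h h1]
              apply congrArg
              apply congrArg
              apply tv_congr
              intro k hk
              rw [show m + 1 + k = (m + 1) + k by omega,
                Phi_eqm1_high h h1 (Nat.le_add_right (m+1) k)]
              congr 1
              omega
            rw [R1, h1, mob_idm1']
  · rw [eStep_nobad h] at hs
    injection hs with hs'
    subst hs'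
    rw [Phi_nobad h]
lemma eSeq_correct (b : ℕ → ℤ) (N : ℕ) :
    ∀ n e, eSeq b N n = Option.some e → cfConv b N = cfConv (Phi^[n] b) e := by
  intro n
  induction n with
  | zero =>
    intro e he
    injection he with he'
    subst he'
    rw [Function.iterate_zero_apply]
  | succ n ih =>
    intro e he
    rw [eSeq] at he
    cases heq : eSeq b N n with
    | none => rw [heq] at he; simp at he
    | some e0 =>
      rw [heq, Option.bind_some] at he
      rw [ih e0 heq, step_main he, Function.iterate_succ_apply']

lemma eStep_bounds {c : ℕ → ℤ} {e e' : ℕ} (hs : eStep c e = Option.some e') :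
    e - 2 ≤ e' ∧ e' ≤ e := by
  by_cases h : ∃ m, badIdx c m
  · by_cases hsm : e + 2 ≤ Nat.find h
    · rw [eStep_small h hsm] at hs; injection hs with hs'; omega
    · by_cases h0 : c (Nat.find h) = 0
      · by_cases he2 : e = Nat.find h - 1 ∨ e = Nat.find h
        · rw [eStep0_none h h0 hsm he2] at hs; exact nomatch hs
        · rw [eStep0_some h h0 hsm he2] at hs; injection hs with hs'; omega
      · by_cases he2 : e = Nat.find h - 1
        · rw [eStep1_none h h0 hsm he2] at hs; exact nomatch hs
        · rw [eStep1_some h h0 hsm he2] at hs; injection hs with hs'; omega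
  · rw [eStep_nobad h] at hs; injection hs with hs'; omega

lemma eStep_decrease {c : ℕ → ℤ} {e e' : ℕ} (hs : eStep c e = Option.some e') :
    e' = e ∨ (∃ h : ∃ m, badIdx c m, ¬(e + 2 ≤ Nat.find h) ∧ e - 2 ≤ e') := by
  by_cases h : ∃ m, badIdx c m
  · by_cases hsm : e + 2 ≤ Nat.find h
    · rw [eStep_small h hsm] at hs; injection hs with hs'; exact Or.inl hs'.symm
    · right
      refine ⟨h, hsm, ?_⟩
      exact (eStep_bounds hs).1
  · rw [eStep_nobad h] at hs; injection hs with hs'; exact Or.inl hs'.symm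

lemma eStep_none_inv {c : ℕ → ℤ} {e : ℕ} (hs : eStep c e = none) :
    ∃ h : ∃ m, badIdx c m,
      (e = Nat.find h - 1 ∨ (e = Nat.find h ∧ c (Nat.find h) = 0)) := by
  by_cases h : ∃ m, badIdx c m
  · refine ⟨h, ?_⟩
    by_cases hsm : e + 2 ≤ Nat.find h
    · rw [eStep_small h hsm] at hs; exact nomatch hs
    · by_cases h0 : c (Nat.find h) = 0
      · by_cases he2 : e = Nat.find h - 1 ∨ e = Nat.find h
        · rcases he2 with he2 | he2
          · exact Or.inl he2
          · exact Or.inr ⟨he2, h0⟩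
        · rw [eStep0_some h h0 hsm he2] at hs; exact nomatch hs
      · by_cases he2 : e = Nat.find h - 1
        · exact Or.inl he2
        · rw [eStep1_some h h0 hsm he2] at hs; exact nomatch hs
  · rw [eStep_nobad h] at hs; exact nomatch hs

lemma eSeq_lb (b : ℕ → ℤ) (N : ℕ) :
    ∀ n e, eSeq b N n = Option.some e → N ≤ e + 2*n ∧ e ≤ N := by
  intro n
  induction n with
  | zero =>
    intro e he
    injection he with he'
    omega
  | succ n ih =>
    intro e he
    rw [eSeq] at he
    cases heq : eSeq b N n with
    | none => rw [heq] at he; simp at he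
    | some e0 =>
      rw [heq, Option.bind_some] at he
      have h1 := ih e0 heq
      have h2 := eStep_bounds he
      omega

lemma pIdx_eq {c : ℕ → ℤ} (h : ∃ m, badIdx c m) : pIdx c = (Nat.find h : ℕ∞) := dif_pos h

lemma bad_gt_of_lt_pIdx {c : ℕ → ℤ} {N : ℕ} (hlt : (N:ℕ∞) < pIdx c) :
    ∀ m, badIdx c m → N < m := by
  intro m hbad
  have h : ∃ m, badIdx c m := ⟨m, hbad⟩
  rw [pIdx_eq h] at hlt
  have h2 : N < Nat.find h := by exact_mod_cast hlt
  exact lt_of_lt_of_le h2 (Nat.find_min' h hbad)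

lemma not_bad_of_lt_pIdx {c : ℕ → ℤ} {k : ℕ} (hlt : (k:ℕ∞) < pIdx c) : ¬ badIdx c k :=
  fun hbad => lt_irrefl k (bad_gt_of_lt_pIdx hlt k hbad)
lemma tv_zero (g : ℕ → ℤ) : tv g 0 = ∞ := rfl

lemma main_mem (b bstar : ℕ → ℤ) (hp : PTendsToTop b) (hb : EventuallyCoeff b bstar)
    (ℓ : ℕ) (hl : 1 ≤ ℓ) :
    ∃ M : ℕ, ∀ N ≥ M, cfConv b N ∈ applyMob bstar ℓ '' KK := by
  classical
  obtain ⟨n₁, hn₁⟩ := hp (ℓ + 3)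
  have freeze : ∀ n ≥ n₁, ∀ k ≤ ℓ + 2, Phi^[n] b k = Phi^[n₁] b k := by
    intro n hn
    induction n, hn using Nat.le_induction with
    | base => intro k _; rfl
    | succ n hn ih =>
      intro k hk
      rw [Function.iterate_succ_apply']
      by_cases hbad : ∃ m, badIdx (Phi^[n] b) m
      · have hgt : ℓ + 3 < Nat.find hbad :=
          bad_gt_of_lt_pIdx (hn₁ n hn) _ (Nat.find_spec hbad)
        rw [Phi_eq_of_lt hbad (by omega)]
        exact ih k hk
      · rw [Phi_nobad hbad]
        exact ih k hk
  have prefix_eq : ∀ n ≥ n₁, ∀ k ≤ ℓ + 2, Phi^[n] b k = bstar k := by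
    intro n hn k hk
    obtain ⟨Nk, hNk⟩ := hb k
    have hmax : Phi^[max n₁ Nk] b k = bstar k := hNk _ (le_max_right _ _)
    rw [freeze n hn k hk, ← freeze (max n₁ Nk) (le_max_left _ _) k hk, hmax]
  set B₀ := (Finset.range n₁).sup (fun n => (pIdx (Phi^[n] b)).toNat) with hB₀def
  have hB₀ : ∀ n < n₁, ∀ (h : ∃ m, badIdx (Phi^[n] b) m), Nat.find h ≤ B₀ := by
    intro n hn h
    have h1 : (pIdx (Phi^[n] b)).toNat = Nat.find h := by rw [pIdx_eq h]; simp
    rw [← h1]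
    exact Finset.le_sup (f := fun n => (pIdx (Phi^[n] b)).toNat) (Finset.mem_range.mpr hn)
  refine ⟨B₀ + 2*n₁ + ℓ + 2, ?_⟩
  intro N hN
  by_cases hterm : ∃ n, eSeq b N (n+1) = none
  · set n := Nat.find hterm with hn
    have hnone : eSeq b N (n+1) = none := Nat.find_spec hterm
    have hsome : ∃ e, eSeq b N n = Option.some e := by
      cases heq : eSeq b N n with
      | none =>
        exfalso
        cases hcn : n with
        | zero => rw [hcn] at heq; simp [eSeq] at heq
        | succ n' =>
          have hmin := Nat.find_min hterm (show n' < n by omega)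
          rw [hcn] at heq
          exact hmin heq
      | some e0 => exact ⟨e0, rfl⟩
    obtain ⟨e, he⟩ := hsome
    have hstep_none : eStep (Phi^[n] b) e = none := by
      rw [eSeq, he, Option.bind_some] at hnone
      exact hnone
    obtain ⟨hbad, hcase⟩ := eStep_none_inv hstep_none
    have hm1 : 1 ≤ Nat.find hbad := (Nat.find_spec hbad).1
    have hbounds := eSeq_lb b N n e he
    have hn_ge : n₁ ≤ n := by
      by_contra hlt
      push_neg at hlt
      have h2 := hB₀ n hlt hbad
      omega
    have hmge : ℓ + 3 < Nat.find hbad :=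
      bad_gt_of_lt_pIdx (hn₁ n hn_ge) _ (Nat.find_spec hbad)
    rw [eSeq_correct b N n e he, cfConv_eq_tv]
    rcases hcase with hcase | ⟨hcase, h0⟩
    · -- e = m - 1
      rw [show e + 1 = ℓ + (e + 1 - ℓ) by omega, tv_add ℓ _ (e+1-ℓ)]
      rw [applyMob_congr ℓ (Phi^[n] b) bstar _ (fun k hk => prefix_eq n hn_ge k (by omega))]
      refine ⟨_, ?_, rfl⟩
      apply tv_mem_KK
      intro k hk
      apply good_of_not_bad (by omega)
      exact Nat.find_min hbad (show ℓ + k < Nat.find hbad by omega)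
    · -- e = m, c m = 0
      rw [show e + 1 = ℓ + ((Nat.find hbad - 1 - ℓ) + (1+1)) by omega,
        tv_add ℓ _ ((Nat.find hbad - 1 - ℓ) + (1+1))]
      rw [applyMob_congr ℓ (Phi^[n] b) bstar _ (fun k hk => prefix_eq n hn_ge k (by omega))]
      refine ⟨_, ?_, rfl⟩
      rw [tv_add (Nat.find hbad - 1 - ℓ) _ (1+1)]
      apply applyMob_mem_KK
      · intro k hk
        apply good_of_not_bad (by omega)
        exact Nat.find_min hbad (show ℓ + k < Nat.find hbad by omega)
      · rw [tv_congr (1+1) _ (fun j => (Phi^[n] b) ((Nat.find hbad - 1) + j))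
          (fun k hk => by
            show Phi^[n] b (ℓ + (Nat.find hbad - 1 - ℓ + k)) = Phi^[n] b (Nat.find hbad - 1 + k)
            exact congrArg (Phi^[n] b) (by omega))]
        rw [tv_shift_succ _ (Nat.find hbad - 1) 1,
          show Nat.find hbad - 1 + 1 = Nat.find hbad by omega,
          tv_shift_succ _ (Nat.find hbad) 0, tv_zero, h0, mob_infty,
          show (((0:ℤ)):ℝ) = (0:ℝ) by norm_num, mob_eq_rmob, rmob_zero]
        exact infty_mem_KK
  · push_neg at hterm
    have hall : ∀ n, ∃ e, eSeq b N n = Option.some e := by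
      intro n
      cases hcn : n with
      | zero => exact ⟨N, rfl⟩
      | succ n' =>
        cases heq : eSeq b N (n' + 1) with
        | none => exact absurd heq (hterm n')
        | some e0 => exact ⟨e0, rfl⟩
    choose E hE using hall
    have hE0 : E 0 = N := by
      have h1 := hE 0
      have h2 : eSeq b N 0 = Option.some N := rfl
      rw [h2] at h1
      injection h1 with h1'
      exact h1'.symm
    have hstep : ∀ n, eStep (Phi^[n] b) (E n) = Option.some (E (n+1)) := by
      intro n
      have h2 := hE (n+1)
      rw [eSeq, hE n, Option.bind_some] at h2
      exact h2
    have hAnti : Antitone E := antitone_nat_of_succ_le (fun n => (eStep_bounds (hstep n)).2)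
    have hinv : ∀ n ≥ n₁, ℓ + 1 ≤ E n := by
      intro n hn
      induction n, hn using Nat.le_induction with
      | base =>
        have h1 := eSeq_lb b N n₁ (E n₁) (hE n₁)
        omega
      | succ n hn ih =>
        rcases eStep_decrease (hstep n) with heq | ⟨hbad, hcond, hlb⟩
        · omega
        · have hmge : ℓ + 3 < Nat.find hbad :=
            bad_gt_of_lt_pIdx (hn₁ n hn) _ (Nat.find_spec hbad)
          omega
    have hne : (Set.range E).Nonempty := ⟨E 0, ⟨0, rfl⟩⟩
    obtain ⟨n₂, hn₂eq⟩ := Nat.sInf_mem hne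
    have hconst : ∀ n ≥ n₂, E n = E n₂ := by
      intro n hn
      refine le_antisymm (hAnti hn) ?_
      rw [hn₂eq]
      exact Nat.sInf_le ⟨n, rfl⟩
    obtain ⟨M₃, hM₃⟩ := hp (E n₂ + 1)
    set n₃ := max M₃ (max n₁ n₂) with hn₃
    have hpidx : ((E n₂ + 1 : ℕ) : ℕ∞) < pIdx (Phi^[n₃] b) := hM₃ n₃ (le_max_left _ _)
    have hEn₃ : E n₃ = E n₂ := hconst n₃ (le_trans (le_max_right _ _) (le_max_right _ _))
    have hn₃n₁ : n₁ ≤ n₃ := le_trans (le_max_left _ _) (le_max_right _ _)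
    have hl1 : ℓ + 1 ≤ E n₂ := hEn₃ ▸ hinv n₃ hn₃n₁
    rw [eSeq_correct b N n₃ (E n₃) (hE n₃), hEn₃, cfConv_eq_tv]
    rw [show E n₂ + 1 = ℓ + (E n₂ + 1 - ℓ) by omega, tv_add ℓ _ (E n₂ + 1 - ℓ)]
    rw [applyMob_congr ℓ (Phi^[n₃] b) bstar _ (fun k hk => prefix_eq n₃ hn₃n₁ k (by omega))]
    refine ⟨_, ?_, rfl⟩
    apply tv_mem_KK
    intro k hk
    apply good_of_not_bad (by omega)
    apply not_bad_of_lt_pIdx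
    exact lt_of_le_of_lt (show ((ℓ + k : ℕ) : ℕ∞) ≤ ((E n₂ + 1 : ℕ) : ℕ∞) by
      exact_mod_cast (show ℓ + k ≤ E n₂ + 1 by omega)) hpidx
lemma bstar_good (b bstar : ℕ → ℤ) (hp : PTendsToTop b) (hb : EventuallyCoeff b bstar) :
    ∀ k, 1 ≤ k → 2 ≤ |bstar k| := by
  intro k hk
  obtain ⟨Nk, hNk⟩ := hb k
  obtain ⟨M, hM⟩ := hp k
  have h1 : Phi^[max Nk M] b k = bstar k := hNk _ (le_max_left _ _)
  have h2 : (k:ℕ∞) < pIdx (Phi^[max Nk M] b) := hM _ (le_max_right _ _)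
  rw [← h1]
  exact good_of_not_bad hk (not_bad_of_lt_pIdx h2)

def Kset (εi : ℤ) (j : ℕ) : Set (OnePoint ℝ) :=
  {z | ∃ x : ℝ, z = ((x:ℝ) : OnePoint ℝ) ∧ 1 ≤ (εi:ℝ)*x ∧ (εi:ℝ)*x ≤ 1 + 2/(2*(j:ℝ)-1)}

lemma eps_facts {εi : ℤ} (hε : εi = 1 ∨ εi = -1) :
    |(εi:ℝ)| = 1 ∧ (εi:ℝ) ≠ 0 ∧ (εi:ℝ)*(εi:ℝ) = 1 := by
  rcases hε with h | h <;> rw [h] <;> norm_num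

lemma mob_eps_base {εi : ℤ} (hε : εi = 1 ∨ εi = -1) {z : OnePoint ℝ} (hz : z ∈ KK) :
    mob (2*εi) z ∈ Kset εi 1 := by
  obtain ⟨habs, hne, hsq⟩ := eps_facts hε
  have hcast : (((2*εi : ℤ)):ℝ) = 2*(εi:ℝ) := by push_cast; ring
  rcases hz with h | ⟨x, rfl, hx⟩
  · subst h
    rw [mob_infty, hcast]
    refine ⟨2*(εi:ℝ), rfl, ?_, ?_⟩ <;> · rw [show (εi:ℝ)*(2*(εi:ℝ)) = 2*((εi:ℝ)*(εi:ℝ)) by ring, hsq] <;> norm_num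
  · have hx0 : x ≠ 0 := by intro h; rw [h, abs_zero] at hx; linarith
    rw [mob_coe _ x hx0, hcast]
    have h1 : |(εi:ℝ)*(1/x)| ≤ 1 := by
      rw [abs_mul, habs, one_mul, abs_div, abs_one, div_le_one (by positivity)]
      exact hx
    rw [abs_le] at h1
    refine ⟨2*(εi:ℝ) - 1/x, rfl, ?_, ?_⟩
    · rw [show (εi:ℝ)*(2*(εi:ℝ) - 1/x) = 2*((εi:ℝ)*(εi:ℝ)) - (εi:ℝ)*(1/x) by ring, hsq]
      linarith [h1.1, h1.2]
    · rw [show (εi:ℝ)*(2*(εi:ℝ) - 1/x) = 2*((εi:ℝ)*(εi:ℝ)) - (εi:ℝ)*(1/x) by ring, hsq,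
        show (2:ℝ)/(2*((1:ℕ):ℝ)-1) = 2 by norm_num]
      linarith [h1.1, h1.2]

lemma mob_eps_step {εi : ℤ} (hε : εi = 1 ∨ εi = -1) {j : ℕ} (hj : 1 ≤ j) {z : OnePoint ℝ}
    (hz : z ∈ Kset εi j) : mob (2*εi) z ∈ Kset εi (j+1) := by
  obtain ⟨habs, hne, hsq⟩ := eps_facts hε
  have hcast : (((2*εi : ℤ)):ℝ) = 2*(εi:ℝ) := by push_cast; ring
  obtain ⟨x, rfl, hx1, hx2⟩ := hz
  set J := (j:ℝ) with hJ
  have hJ1 : 1 ≤ J := by rw [hJ]; exact_mod_cast hj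
  have hd1 : 0 < 2*J - 1 := by linarith
  have hd2 : 0 < 2*J + 1 := by linarith
  set u := (εi:ℝ)*x with hu
  have hu1 : 1 ≤ u := hx1
  have hu2 : u ≤ 1 + 2/(2*J-1) := hx2
  have hu0 : 0 < u := by linarith
  have hx0 : x ≠ 0 := by
    intro h
    rw [h, mul_zero] at hu
    rw [hu] at hu1
    linarith
  have hinv : (εi:ℝ)*(1/x) = 1/u := by
    rw [hu]
    rw [eq_div_iff (by positivity : (εi:ℝ)*x ≠ 0)]
    field_simp
    rw [sq, hsq]
  rw [mob_coe _ x hx0, hcast]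
  refine ⟨2*(εi:ℝ) - 1/x, rfl, ?_, ?_⟩
  · rw [show (εi:ℝ)*(2*(εi:ℝ) - 1/x) = 2*((εi:ℝ)*(εi:ℝ)) - (εi:ℝ)*(1/x) by ring, hsq, hinv]
    have : 1/u ≤ 1 := by rw [div_le_one hu0]; exact hu1
    linarith
  · rw [show (εi:ℝ)*(2*(εi:ℝ) - 1/x) = 2*((εi:ℝ)*(εi:ℝ)) - (εi:ℝ)*(1/x) by ring, hsq, hinv]
    have hcast2 : 2*((j:ℕ)+1:ℕ) - 1 = 2*J + 1 := by push_cast; ring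
    have key : (2*J-1) * (1 + 2/(2*J-1)) = 2*J+1 := by field_simp; ring
    have h5 : (2*J-1) * u ≤ 2*J+1 := by
      calc (2*J-1) * u ≤ (2*J-1) * (1 + 2/(2*J-1)) := by
            exact mul_le_mul_of_nonneg_left hu2 hd1.le
      _ = 2*J+1 := key
    have h6 : (2*J-1)/(2*J+1) ≤ 1/u := by
      rw [div_le_div_iff₀ hd2 hu0]
      linarith
    have h7 : (1:ℝ) - 2/(2*J+1) = (2*J-1)/(2*J+1) := by field_simp; ring
    have h8 : 2*((j+1:ℕ):ℝ) - 1 = 2*J+1 := by push_cast; ring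
    rw [h8]
    linarith
lemma iter_eps {εi : ℤ} (hε : εi = 1 ∨ εi = -1) :
    ∀ j, 1 ≤ j → ∀ z ∈ KK, applyMob (fun _ => 2*εi) j z ∈ Kset εi j := by
  intro j hj
  induction j, hj using Nat.le_induction with
  | base =>
    intro z hz
    have h1 : applyMob (fun _ => (2*εi : ℤ)) 1 z = mob (2*εi) z := rfl
    rw [h1]
    exact mob_eps_base hε hz
  | succ j hj ih =>
    intro z hz
    show mob (2*εi) (applyMob (fun _ => (2*εi:ℤ)) j z) ∈ Kset εi (j+1)
    exact mob_eps_step hε hj (ih z hz)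

noncomputable def rch : (ℕ → ℤ) → ℕ → ℝ → ℝ
  | _, 0, x => x
  | g, (a+1), x => (g 0 : ℝ) - 1/(rch (fun j => g (j+1)) a x)

lemma rch_spec : ∀ (a : ℕ) (g : ℕ → ℤ), (∀ k < a, 2 ≤ |g k|) → ∀ x : ℝ, 1 ≤ |x| →
    1 ≤ |rch g a x| ∧ applyMob g a ((x:ℝ) : OnePoint ℝ) = ((rch g a x : ℝ) : OnePoint ℝ) := by
  intro a
  induction a with
  | zero => exact fun g _ x hx => ⟨hx, rfl⟩
  | succ a ih =>
    intro g hg x hx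
    obtain ⟨hy1, hy2⟩ := ih (fun j => g (j+1)) (fun k hk => hg (k+1) (by omega)) x hx
    set y := rch (fun j => g (j+1)) a x with hy
    have hyne : y ≠ 0 := by intro h; rw [h, abs_zero] at hy1; linarith
    have hg0 : (2:ℝ) ≤ |((g 0 : ℤ):ℝ)| := by
      rw [← Int.cast_abs]
      exact_mod_cast hg 0 (by omega)
    have hval : rch g (a+1) x = (g 0 : ℝ) - 1/y := rfl
    constructor
    · rw [hval]
      have h1 : |1/y| ≤ 1 := by
        rw [abs_div, abs_one, div_le_one (by positivity)]
        exact hy1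
      calc (1:ℝ) ≤ |((g 0:ℤ):ℝ)| - |1/y| := by linarith
      _ ≤ |((g 0:ℤ):ℝ) - 1/y| := abs_sub_abs_le_abs_sub _ _
    · have happ : applyMob g (a+1) ((x:ℝ) : OnePoint ℝ)
          = mob (g 0) (applyMob (fun j => g (j+1)) a ((x:ℝ) : OnePoint ℝ)) := rfl
      rw [happ, hy2, mob_eq_rmob, rmob_coe _ hyne, hval]

lemma rch_contOn : ∀ (a : ℕ) (g : ℕ → ℤ), (∀ k < a, 2 ≤ |g k|) →
    ContinuousOn (rch g a) {x : ℝ | 1 ≤ |x|} := by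
  intro a
  induction a with
  | zero =>
    intro g _
    exact continuousOn_id
  | succ a ih =>
    intro g hg
    have h1 := ih (fun j => g (j+1)) (fun k hk => hg (k+1) (by omega))
    have h2 : ContinuousOn (fun x => (g 0 : ℝ) - 1/(rch (fun j => g (j+1)) a x))
        {x : ℝ | 1 ≤ |x|} := by
      apply ContinuousOn.sub continuousOn_const
      apply ContinuousOn.div continuousOn_const h1
      intro x hx
      have := (rch_spec a (fun j => g (j+1)) (fun k hk => hg (k+1) (by omega)) x hx).1
      intro h
      rw [h, abs_zero] at this
      linarith
    exact h2

noncomputable def qch : (ℕ → ℤ) → ℕ → ℚ → ℚ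
  | _, 0, x => x
  | g, (a+1), x => (g 0 : ℚ) - 1/(qch (fun j => g (j+1)) a x)

lemma qch_spec : ∀ (a : ℕ) (g : ℕ → ℤ), (∀ k < a, 2 ≤ |g k|) → ∀ q : ℚ, 1 ≤ |q| →
    1 ≤ |qch g a q| ∧ rch g a ((q:ℚ):ℝ) = ((qch g a q : ℚ) : ℝ) := by
  intro a
  induction a with
  | zero => exact fun g _ q hq => ⟨hq, rfl⟩
  | succ a ih =>
    intro g hg q hq
    obtain ⟨hy1, hy2⟩ := ih (fun j => g (j+1)) (fun k hk => hg (k+1) (by omega)) q hq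
    set y := qch (fun j => g (j+1)) a q with hy
    have hyne : y ≠ 0 := by intro h; rw [h, abs_zero] at hy1; linarith
    have hg0 : (2:ℚ) ≤ |((g 0 : ℤ):ℚ)| := by
      rw [← Int.cast_abs]
      exact_mod_cast hg 0 (by omega)
    constructor
    · have hval : qch g (a+1) q = (g 0 : ℚ) - 1/y := rfl
      rw [hval]
      have h1 : |1/y| ≤ 1 := by
        rw [abs_div, abs_one, div_le_one (by positivity)]
        exact hy1
      calc (1:ℚ) ≤ |((g 0:ℤ):ℚ)| - |1/y| := by linarith
      _ ≤ |((g 0:ℤ):ℚ) - 1/y| := abs_sub_abs_le_abs_sub _ _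
    · have hval1 : rch g (a+1) ((q:ℚ):ℝ)
          = (g 0 : ℝ) - 1/(rch (fun j => g (j+1)) a ((q:ℚ):ℝ)) := rfl
      have hval2 : qch g (a+1) q = (g 0 : ℚ) - 1/y := rfl
      rw [hval1, hval2, hy2]
      push_cast
      ring
theorem stmt0' (b bstar : ℕ → ℤ) (hp : PTendsToTop b) (hb : EventuallyCoeff b bstar)
    (ht : SameTail bstar (fun _ => 2) ∨ SameTail bstar (fun _ => -2)) :
    ∃ q : ℚ, Filter.Tendsto (cfConv b) Filter.atTop (nhds ((q : ℝ) : OnePoint ℝ)) := by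
  classical
  obtain ⟨εi, r₀, hεi, htail⟩ : ∃ (εi : ℤ) (r₀ : ℕ), (εi = 1 ∨ εi = -1) ∧
      ∀ k, bstar (r₀ + 1 + k) = 2*εi := by
    rcases ht with ⟨r, s, hrs⟩ | ⟨r, s, hrs⟩
    · refine ⟨1, r, Or.inl rfl, fun k => ?_⟩
      have h1 := hrs (1 + k)
      rw [show r + (1+k) = r + 1 + k by omega] at h1
      rw [h1]
      ring
    · refine ⟨-1, r, Or.inr rfl, fun k => ?_⟩
      have h1 := hrs (1 + k)
      rw [show r + (1+k) = r + 1 + k by omega] at h1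
      rw [h1]
      ring
  obtain ⟨habs, hne, hsq⟩ := eps_facts hεi
  set g1 : ℕ → ℤ := fun j => bstar (j+1) with hg1def
  have hgood : ∀ k, 1 ≤ k → 2 ≤ |bstar k| := bstar_good b bstar hp hb
  have hg1 : ∀ k < r₀, 2 ≤ |g1 k| := fun k _ => hgood (k+1) (by omega)
  have hq1 : (1:ℚ) ≤ |((εi:ℤ):ℚ)| := by
    rcases hεi with h | h <;> rw [h] <;> norm_num
  obtain ⟨hyabs, hycast⟩ := qch_spec r₀ g1 hg1 (εi:ℚ) hq1
  set yq : ℚ := qch g1 r₀ (εi:ℚ) with hyq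
  have hyne : yq ≠ 0 := by intro h; rw [h, abs_zero] at hyabs; linarith
  refine ⟨(bstar 0 : ℚ) - 1/yq, ?_⟩
  rw [Filter.tendsto_def]
  intro U hU
  rw [Filter.mem_atTop_sets]
  -- continuity setup
  set D : Set ℝ := {x : ℝ | 1 ≤ |x|} with hD
  set Fr : ℝ → ℝ := fun x => (bstar 0 : ℝ) - 1/(rch g1 r₀ x) with hFr
  have hFrcont : ContinuousOn Fr D := by
    apply ContinuousOn.sub continuousOn_const
    apply ContinuousOn.div continuousOn_const (rch_contOn r₀ g1 hg1)
    intro x hx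
    have h1 := (rch_spec r₀ g1 hg1 x hx).1
    intro h
    rw [h, abs_zero] at h1
    linarith
  have hεD : (εi:ℝ) ∈ D := by
    show 1 ≤ |(εi:ℝ)|
    rw [habs]
  have hrval : rch g1 r₀ ((εi:ℝ)) = (yq:ℝ) := by
    have h1 : ((εi:ℝ)) = (((εi:ℚ)):ℝ) := by push_cast; rfl
    rw [h1, hycast]
  have hFrval : Fr ((εi:ℝ)) = ((( (bstar 0 : ℚ) - 1/yq : ℚ)):ℝ) := by
    rw [hFr]
    show (bstar 0 : ℝ) - 1/(rch g1 r₀ ((εi:ℝ))) = _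
    rw [hrval]
    push_cast
    ring
  have hV : (fun x : ℝ => ((x:ℝ) : OnePoint ℝ)) ⁻¹' U ∈ 𝓝 ((((bstar 0 : ℚ) - 1/yq : ℚ)):ℝ) :=
    OnePoint.continuous_coe.continuousAt.preimage_mem_nhds hU
  have hcwa : ContinuousWithinAt Fr D ((εi:ℝ)) := hFrcont _ hεD
  have hW : Fr ⁻¹' ((fun x : ℝ => ((x:ℝ) : OnePoint ℝ)) ⁻¹' U) ∈ 𝓝[D] ((εi:ℝ)) := by
    apply hcwa
    rw [hFrval]
    exact hV
  obtain ⟨δ, hδpos, hball⟩ := Metric.mem_nhdsWithin_iff.mp hW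
  obtain ⟨j₀, hj₀1, hj₀δ⟩ : ∃ j₀ : ℕ, 1 ≤ j₀ ∧ 2/(2*(j₀:ℝ)-1) < δ := by
    obtain ⟨j, hj⟩ := exists_nat_gt (2/δ + 1)
    have hδ2 : (0:ℝ) < 2/δ := by positivity
    have hj1 : (1:ℝ) ≤ (j:ℝ) := by linarith
    have h3 : 0 < 2*(j:ℝ) - 1 := by linarith
    refine ⟨j, by exact_mod_cast hj1, ?_⟩
    rw [div_lt_iff₀ h3]
    have h5 : (2/δ)*δ = 2 := by field_simp
    have h6 : 2/δ < 2*(j:ℝ)-1 := by linarith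
    calc (2:ℝ) = (2/δ)*δ := h5.symm
    _ < (2*(j:ℝ)-1)*δ := mul_lt_mul_of_pos_right h6 hδpos
    _ = δ*(2*(j:ℝ)-1) := by ring
  obtain ⟨M, hM⟩ := main_mem b bstar hp hb (r₀ + 1 + j₀) (by omega)
  refine ⟨M, ?_⟩
  intro N hN
  show cfConv b N ∈ U
  obtain ⟨z, hzKK, hz⟩ := hM N hN
  rw [← hz, applyMob_add (r₀+1) bstar j₀ z,
    applyMob_congr j₀ (fun j => bstar ((r₀+1) + j)) (fun _ => 2*εi) z (fun k hk => htail k)]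
  have hin : applyMob (fun _ => 2*εi) j₀ z ∈ Kset εi j₀ := iter_eps hεi j₀ hj₀1 z hzKK
  obtain ⟨x, hxz, hx1, hx2⟩ := hin
  rw [hxz]
  have hxD : 1 ≤ |x| := by
    have h1 : (εi:ℝ)*x ≤ |(εi:ℝ)*x| := le_abs_self _
    rw [abs_mul, habs, one_mul] at h1
    linarith
  obtain ⟨hrabs, hrcast⟩ := rch_spec r₀ g1 hg1 x hxD
  have hsplit : applyMob bstar (r₀+1) ((x:ℝ) : OnePoint ℝ)
      = mob (bstar 0) (applyMob g1 r₀ ((x:ℝ) : OnePoint ℝ)) := rfl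
  have hrne : rch g1 r₀ x ≠ 0 := by
    intro h
    rw [h, abs_zero] at hrabs
    linarith
  have hmobfr : mob (bstar 0) ((rch g1 r₀ x : ℝ) : OnePoint ℝ) = ((Fr x : ℝ) : OnePoint ℝ) := by
    rw [mob_eq_rmob, rmob_coe _ hrne]
  rw [hsplit, hrcast, hmobfr]
  have hxmem : x ∈ Metric.ball ((εi:ℝ)) δ ∩ D := by
    constructor
    · rw [Metric.mem_ball, Real.dist_eq]
      have hsub : |x - (εi:ℝ)| = |(εi:ℝ)*x - 1| := by
        rcases hεi with h | h <;> rw [h]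
        · push_cast
          rw [one_mul]
        · push_cast
          rw [show (-1:ℝ)*x - 1 = -(x - -1) by ring, abs_neg]
      rw [hsub, abs_of_nonneg (by linarith : (0:ℝ) ≤ (εi:ℝ)*x - 1)]
      linarith
    · exact hxD
  exact hball hxmem

/-- **Theorem 1(i)(a).** If `p⁽ⁿ⁾ → ∞` and the limit continued fraction `[b₀*, b₁*, …]`
has the same tail as `[2,2,…]` or `[-2,-2,…]`, then `[b₀, b₁, …]` converges to a rational. -/
theorem stmt0 (b bstar : ℕ → ℤ) (hp : PTendsToTop b) (hb : EventuallyCoeff b bstar)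
    (ht : SameTail bstar (fun _ => 2) ∨ SameTail bstar (fun _ => -2)) :
    ∃ q : ℚ, Filter.Tendsto (cfConv b) Filter.atTop (nhds ((q : ℝ) : OnePoint ℝ)) := by
  exact stmt0' b bstar hp hb ht
end

section
/- Let (b₀,b₁,…) be a sequence of integers with |b_n| ≥ 2 for all n ≥ 1. Then the continued fraction [b₀,b₁,…] converges to a real number, and this number is rational if and only if [b₀,b₁,…] has the same tail as [2,2,2,…] or as [−2,−2,−2,…] (otherwise it is irrational). -/
open Filter Topology OnePoint

namespace CFaux

def shf (b : ℕ → ℤ) : ℕ → ℤ := fun i => b (i + 1)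

def H2 (b : ℕ → ℤ) : Prop := ∀ i, 2 ≤ |b i|
def H1 (b : ℕ → ℤ) : Prop := ∀ i, 1 ≤ i → 2 ≤ |b i|

lemma H1.shf {b : ℕ → ℤ} (h : H1 b) : H2 (shf b) := fun i => h (i + 1) (by omega)
lemma H2.h1 {b : ℕ → ℤ} (h : H2 b) : H1 b := fun i _ => h i

def pq : ℕ → (ℕ → ℤ) → ℤ × ℤ
  | 0, b => (b 0, 1)
  | n + 1, b => (b 0 * (pq n (shf b)).1 - (pq n (shf b)).2, (pq n (shf b)).1)

lemma pq_zero (b : ℕ → ℤ) : pq 0 b = (b 0, 1) := rfl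
lemma pq_succ (n : ℕ) (b : ℕ → ℤ) :
    pq (n + 1) b = (b 0 * (pq n (shf b)).1 - (pq n (shf b)).2, (pq n (shf b)).1) := rfl

lemma absB : ∀ (n : ℕ) (b : ℕ → ℤ), H2 b → |(pq n b).2| + 1 ≤ |(pq n b).1| := by
  intro n
  induction n with
  | zero => intro b hb; simpa [pq_zero] using hb 0
  | succ n ih =>
    intro b hb
    have hX := ih (shf b) fun i => hb (i + 1)
    simp only [pq_succ]
    have h1 : |b 0 * (pq n (shf b)).1| - |(pq n (shf b)).2| ≤
        |b 0 * (pq n (shf b)).1 - (pq n (shf b)).2| := abs_sub_abs_le_abs_sub _ _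
    have h2 : 2 ≤ |b 0| := hb 0
    have h3 : |b 0 * (pq n (shf b)).1| = |b 0| * |(pq n (shf b)).1| := abs_mul _ _
    nlinarith [abs_nonneg (pq n (shf b)).1, abs_nonneg (pq n (shf b)).2]

lemma dpos : ∀ (n : ℕ) (b : ℕ → ℤ), H1 b → 1 ≤ |(pq n b).2| := by
  intro n
  cases n with
  | zero => intro b _; simp [pq_zero]
  | succ n =>
    intro b hb
    have := absB n (shf b) hb.shf
    simp only [pq_succ]
    have := abs_nonneg (pq n (shf b)).2
    omega

lemma dgrow : ∀ (n : ℕ) (b : ℕ → ℤ), H1 b → (n : ℤ) ≤ |(pq n b).2| := by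
  intro n
  induction n with
  | zero => intro b _; simp [pq_zero]
  | succ n ih =>
    intro b hb
    have h1 := absB n (shf b) hb.shf
    have h2 := ih (shf b) hb.shf.h1
    simp only [pq_succ]
    push_cast
    omega

lemma detm : ∀ (n : ℕ) (b : ℕ → ℤ),
    (pq (n + 1) b).1 * (pq n b).2 - (pq n b).1 * (pq (n + 1) b).2 = -1 := by
  intro n
  induction n with
  | zero => intro b; simp [pq_zero, pq_succ]
  | succ n ih =>
    intro b
    have := ih (shf b)
    simp only [pq_succ] at *
    ring_nf at *
    linarith

noncomputable def vR (b : ℕ → ℤ) (n : ℕ) : ℝ := ((pq n b).1 : ℝ) / ((pq n b).2 : ℝ)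

lemma numR_ne {b : ℕ → ℤ} (hb : H2 b) (n : ℕ) : ((pq n b).1 : ℝ) ≠ 0 := by
  have h := absB n b hb
  have h2 := abs_nonneg (pq n b).2
  exact Int.cast_ne_zero.mpr (by intro h0; rw [h0] at h; simp at h; omega)

lemma denR_ne {b : ℕ → ℤ} (hb : H1 b) (n : ℕ) : ((pq n b).2 : ℝ) ≠ 0 := by
  have h := dpos n b hb
  exact Int.cast_ne_zero.mpr (by intro h0; rw [h0] at h; simp at h)

lemma vR_ne {b : ℕ → ℤ} (hb : H2 b) (n : ℕ) : vR b n ≠ 0 :=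
  div_ne_zero (numR_ne hb n) (denR_ne hb.h1 n)

lemma vR_abs {b : ℕ → ℤ} (hb : H2 b) (n : ℕ) : 1 ≤ |vR b n| := by
  have h1 : ((|(pq n b).2| : ℤ) : ℝ) + 1 ≤ ((|(pq n b).1| : ℤ) : ℝ) := by
    exact_mod_cast absB n b hb
  have h2 : (1 : ℝ) ≤ ((|(pq n b).2| : ℤ) : ℝ) := by exact_mod_cast dpos n b hb.h1
  rw [vR, abs_div]
  rw [le_div_iff₀ (by push_cast [Int.cast_abs] at h2 ⊢; linarith)]
  push_cast [Int.cast_abs] at h1 h2 ⊢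
  linarith

lemma vR_rec {b : ℕ → ℤ} (hb : H1 b) (n : ℕ) :
    vR b (n + 1) = (b 0 : ℝ) - 1 / vR (shf b) n := by
  have hX : ((pq n (shf b)).1 : ℝ) ≠ 0 := numR_ne hb.shf n
  have hY : ((pq n (shf b)).2 : ℝ) ≠ 0 := denR_ne hb.shf.h1 n
  rw [vR, vR, pq_succ]
  push_cast
  field_simp


lemma mob_coe (b : ℤ) {x : ℝ} (hx : x ≠ 0) :
    mob b ((x : ℝ) : OnePoint ℝ) = (((b : ℝ) - 1 / x : ℝ) : OnePoint ℝ) := by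
  show (if x = 0 then (∞ : OnePoint ℝ) else (((b : ℝ) - 1 / x : ℝ) : OnePoint ℝ)) = _
  rw [if_neg hx]

lemma mob_infty (b : ℤ) : mob b ∞ = (((b : ℤ) : ℝ) : OnePoint ℝ) := rfl

lemma cfConv_zero (b : ℕ → ℤ) : cfConv b 0 = (((b 0 : ℝ)) : OnePoint ℝ) := by
  have h1 : List.range 1 = [0] := rfl
  show cfVal ((List.range 1).map b) = _
  rw [h1]
  simp [cfVal, mob_infty]

lemma cfConv_succ (b : ℕ → ℤ) (n : ℕ) :
    cfConv b (n + 1) = mob (b 0) (cfConv (shf b) n) := by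
  show cfVal ((List.range (n + 1 + 1)).map b) = _
  rw [List.range_succ_eq_map]
  have hf : b ∘ Nat.succ = shf b := funext fun a => rfl
  simp only [List.map_cons, List.map_map, cfVal, hf]
  rfl

lemma shf_iter : ∀ (r : ℕ) (b : ℕ → ℤ) (k : ℕ), (shf^[r] b) k = b (r + k) := by
  intro r
  induction r with
  | zero => intro b k; simp
  | succ r ih =>
    intro b k
    rw [Function.iterate_succ_apply, ih (shf b) k]
    simp only [shf]
    congr 1
    omega


lemma valE : ∀ (n : ℕ) (b : ℕ → ℤ), H1 b → cfConv b n = ((vR b n : ℝ) : OnePoint ℝ) := by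
  intro n
  induction n with
  | zero =>
    intro b _
    rw [cfConv_zero]
    have : vR b 0 = ((b 0 : ℤ) : ℝ) := by simp [vR, pq_zero]
    rw [this]
  | succ n ih =>
    intro b hb
    rw [cfConv_succ, ih (shf b) hb.shf.h1]
    have hvne : vR (shf b) n ≠ 0 := vR_ne hb.shf n
    rw [mob_coe _ hvne, vR_rec hb n]

lemma summable_aux : Summable (fun n : ℕ => 4 / ((n : ℝ) + 1) ^ 2) := by
  have h : Summable (fun n : ℕ => 1 / (n : ℝ) ^ 2) :=
    Real.summable_one_div_nat_pow.mpr (by norm_num)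
  have h2 : Summable (fun n : ℕ => 1 / ((n : ℝ) + 1) ^ 2) := by
    have := (summable_nat_add_iff (f := fun n : ℕ => 1 / (n : ℝ) ^ 2) 1).mpr h
    simpa using this
  simpa [div_eq_mul_inv] using h2.mul_left 4

lemma conv {b : ℕ → ℤ} (hb : H1 b) : ∃ x : ℝ, Tendsto (vR b) atTop (nhds x) := by
  apply cauchySeq_tendsto_of_complete
  apply cauchySeq_of_dist_le_of_summable (fun n : ℕ => 4 / ((n : ℝ) + 1) ^ 2) _ summable_aux
  intro n
  have hD0 : ((pq n b).2 : ℝ) ≠ 0 := denR_ne hb n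
  have hD1 : ((pq (n + 1) b).2 : ℝ) ≠ 0 := denR_ne hb (n + 1)
  have hdet : ((pq (n + 1) b).1 : ℝ) * ((pq n b).2 : ℝ) -
      ((pq n b).1 : ℝ) * ((pq (n + 1) b).2 : ℝ) = -1 := by exact_mod_cast detm n b
  have habs0 : (1 : ℝ) ≤ |((pq n b).2 : ℝ)| := by
    have := dpos n b hb; push_cast [← Int.cast_abs]; exact_mod_cast this
  have habsn : ((n : ℝ)) ≤ |((pq n b).2 : ℝ)| := by
    have := dgrow n b hb; push_cast [← Int.cast_abs]; exact_mod_cast this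
  have habs1 : ((n : ℝ)) + 1 ≤ |((pq (n + 1) b).2 : ℝ)| := by
    have := dgrow (n + 1) b hb; push_cast [← Int.cast_abs]; exact_mod_cast this
  have hprod : (0 : ℝ) < |((pq n b).2 : ℝ)| * |((pq (n + 1) b).2 : ℝ)| := by
    positivity
  have hdist : dist (vR b n) (vR b (n + 1)) =
      1 / (|((pq n b).2 : ℝ)| * |((pq (n + 1) b).2 : ℝ)|) := by
    rw [Real.dist_eq, vR, vR, div_sub_div _ _ hD0 hD1, abs_div, abs_mul]
    congr 1
    have : ((pq n b).1 : ℝ) * ((pq (n + 1) b).2 : ℝ) -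
        ((pq n b).2 : ℝ) * ((pq (n + 1) b).1 : ℝ) = 1 := by linarith
    rw [this, abs_one]
  rw [hdist, div_le_div_iff₀ hprod (by positivity)]
  have key : ((n : ℝ) + 1) ^ 2 ≤ 4 * (|((pq n b).2 : ℝ)| * |((pq (n + 1) b).2 : ℝ)|) := by
    nlinarith [abs_nonneg ((pq n b).2 : ℝ), abs_nonneg ((pq (n + 1) b).2 : ℝ),
      mul_le_mul habs0 habs1 (by positivity) (abs_nonneg _),
      mul_le_mul habsn habs1 (by positivity) (abs_nonneg _)]
  linarith

lemma pq_const2 : ∀ n : ℕ, pq n (fun _ => (2 : ℤ)) = ((n : ℤ) + 2, (n : ℤ) + 1) := by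
  intro n
  induction n with
  | zero => simp [pq_zero]
  | succ n ih =>
    have ih' : pq n (shf fun _ => (2 : ℤ)) = ((n : ℤ) + 2, (n : ℤ) + 1) := ih
    rw [pq_succ, ih']
    simp only
    rw [Prod.mk.injEq]
    constructor <;> push_cast <;> ring

lemma pq_constm2 : ∀ n : ℕ,
    pq n (fun _ => (-2 : ℤ)) = ((-1) ^ (n + 1) * ((n : ℤ) + 2), (-1) ^ n * ((n : ℤ) + 1)) := by
  intro n
  induction n with
  | zero => simp [pq_zero]
  | succ n ih =>
    have ih' : pq n (shf fun _ => (-2 : ℤ)) =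
        ((-1) ^ (n + 1) * ((n : ℤ) + 2), (-1) ^ n * ((n : ℤ) + 1)) := ih
    rw [pq_succ, ih']
    simp only
    rw [Prod.mk.injEq]
    constructor <;> push_cast <;> ring

lemma tendsto_const2 : Tendsto (vR (fun _ => (2 : ℤ))) atTop (nhds 1) := by
  have h : ∀ n : ℕ, vR (fun _ => (2 : ℤ)) n = 1 + 1 / ((n : ℝ) + 1) := by
    intro n
    rw [vR, pq_const2]
    have h0 : ((n : ℝ) + 1) ≠ 0 := by positivity
    push_cast
    field_simp
    ring
  rw [tendsto_congr h]
  simpa using tendsto_const_nhds.add (tendsto_one_div_add_atTop_nhds_zero_nat (𝕜 := ℝ))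

lemma tendsto_constm2 : Tendsto (vR (fun _ => (-2 : ℤ))) atTop (nhds (-1)) := by
  have h : ∀ n : ℕ, vR (fun _ => (-2 : ℤ)) n = -1 - 1 / ((n : ℝ) + 1) := by
    intro n
    rw [vR, pq_constm2]
    have h1 : ((n : ℝ) + 1) ≠ 0 := by positivity
    have h2 : ((-1 : ℝ)) ^ n ≠ 0 := by positivity
    push_cast
    rw [pow_succ]
    field_simp
    ring
  rw [tendsto_congr h]
  have ht : Tendsto (fun n : ℕ => (-1 : ℝ) - 1 / ((n : ℝ) + 1)) atTop (nhds ((-1 : ℝ) - 0)) :=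
    Tendsto.sub tendsto_const_nhds tendsto_one_div_add_atTop_nhds_zero_nat
  simpa using ht

lemma nat_descent (h : ℕ → ℕ) (mono : ∀ k, h (k + 1) ≤ h k) : ∃ m, h (m + 1) = h m := by
  by_contra hc
  push_neg at hc
  have hlt : ∀ k, h (k + 1) < h k := fun k => lt_of_le_of_ne (mono k) (hc k)
  have hdes : ∀ k, h k + k ≤ h 0 := by
    intro k
    induction k with
    | zero => simp
    | succ k ih => have := hlt k; omega
  have := hdes (h 0 + 1)
  omega

end CFaux

open CFaux in
/-- **Theorem 2.** If `|bₙ| ≥ 2` for all `n ≥ 1`, then `[b₀, b₁, …]` converges to a real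
number, which is rational if and only if `[b₀, b₁, …]` has the same tail as `[2,2,…]`
or `[-2,-2,…]` (and is irrational otherwise). -/
theorem stmt4 (b : ℕ → ℤ) (hb : ∀ n : ℕ, 1 ≤ n → 2 ≤ |b n|) :
    ∃ α : ℝ, Filter.Tendsto (cfConv b) Filter.atTop (nhds ((α : OnePoint ℝ))) ∧
      ((∃ q : ℚ, α = (q : ℝ)) ↔
        (SameTail b (fun _ => 2) ∨ SameTail b (fun _ => -2))) := by
  classical
  have hb1 : H1 b := hb
  have hiter : ∀ k, H1 (shf^[k] b) := by
    intro k i hi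
    rw [shf_iter]
    exact hb (k + i) (by omega)
  have hiter2 : ∀ k, 1 ≤ k → H2 (shf^[k] b) := by
    intro k hk i
    rw [shf_iter]
    exact hb (k + i) (by omega)
  choose t ht using fun k => conv (hiter k)
  have habs : ∀ k, 1 ≤ k → 1 ≤ |t k| := by
    intro k hk
    have h1 : Filter.Tendsto (fun n => |vR (shf^[k] b) n|) Filter.atTop (nhds |t k|) :=
      (ht k).abs
    exact ge_of_tendsto' h1 (fun n => vR_abs (hiter2 k hk) n)
  have hne : ∀ k, 1 ≤ k → t k ≠ 0 := by
    intro k hk h0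
    have := habs k hk
    rw [h0, abs_zero] at this
    linarith
  have hrel : ∀ k, t k = (b k : ℝ) - 1 / t (k + 1) := by
    intro k
    have h1 : Filter.Tendsto (fun n => vR (shf^[k] b) (n + 1)) Filter.atTop (nhds (t k)) :=
      (ht k).comp (Filter.tendsto_add_atTop_nat 1)
    have h2 : Filter.Tendsto (fun n => (b k : ℝ) - 1 / vR (shf^[k + 1] b) n) Filter.atTop
        (nhds ((b k : ℝ) - 1 / t (k + 1))) :=
      Filter.Tendsto.sub tendsto_const_nhds
        (Filter.Tendsto.div tendsto_const_nhds (ht (k + 1)) (hne (k + 1) (by omega)))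
    have heq : ∀ n, vR (shf^[k] b) (n + 1) = (b k : ℝ) - 1 / vR (shf^[k + 1] b) n := by
      intro n
      rw [vR_rec (hiter k) n]
      have e0 : (shf^[k] b) 0 = b k := by simpa using shf_iter k b 0
      rw [e0, ← Function.iterate_succ_apply' shf k b]
    exact tendsto_nhds_unique (Filter.Tendsto.congr heq h1) h2
  -- step lemmas
  have stepP : ∀ j, 1 ≤ j → t j = 1 → b j = 2 ∧ t (j + 1) = 1 := by
    intro j hj h1
    have hr := hrel j
    have ha := habs (j + 1) (by omega)
    have hn := hne (j + 1) (by omega)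
    rw [h1] at hr
    have hinv : 1 / t (j + 1) = (b j : ℝ) - 1 := by linarith
    have habs2 : |1 / t (j + 1)| ≤ 1 := by
      rw [abs_div, abs_one, div_le_one (by linarith)]
      linarith
    rw [hinv, abs_le] at habs2
    have hb2 := hb j hj
    have l1 : b j ≤ 2 := by exact_mod_cast (by linarith [habs2.2] : (b j : ℝ) ≤ 2)
    have l2 : 0 ≤ b j := by exact_mod_cast (by linarith [habs2.1] : (0 : ℝ) ≤ (b j : ℝ))
    have labs := abs_of_nonneg l2
    have hbj : b j = 2 := by omega
    refine ⟨hbj, ?_⟩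
    rw [hbj] at hinv
    have h2 : 1 / t (j + 1) = 1 := by push_cast at hinv; linarith
    field_simp at h2
    linarith
  have stepN : ∀ j, 1 ≤ j → t j = -1 → b j = -2 ∧ t (j + 1) = -1 := by
    intro j hj h1
    have hr := hrel j
    have ha := habs (j + 1) (by omega)
    have hn := hne (j + 1) (by omega)
    rw [h1] at hr
    have hinv : 1 / t (j + 1) = (b j : ℝ) + 1 := by linarith
    have habs2 : |1 / t (j + 1)| ≤ 1 := by
      rw [abs_div, abs_one, div_le_one (by linarith)]
      linarith
    rw [hinv, abs_le] at habs2
    have hb2 := hb j hj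
    have l1 : b j ≤ 0 := by exact_mod_cast (by linarith [habs2.2] : (b j : ℝ) ≤ 0)
    have l2 : -2 ≤ b j := by exact_mod_cast (by linarith [habs2.1] : (-2 : ℝ) ≤ (b j : ℝ))
    have labs := abs_of_nonpos l1
    have hbj : b j = -2 := by omega
    refine ⟨hbj, ?_⟩
    rw [hbj] at hinv
    have h2 : 1 / t (j + 1) = -1 := by push_cast at hinv; linarith
    field_simp at h2
    linarith
  refine ⟨t 0, ?_, ?_⟩
  · have h0 : Filter.Tendsto (vR b) Filter.atTop (nhds (t 0)) := ht 0
    have hcont := (OnePoint.continuous_coe (X := ℝ)).tendsto (t 0)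
    exact (hcont.comp h0).congr (fun n => (valE n b hb1).symm)
  constructor
  · rintro ⟨q, hq⟩
    have ht1ne : t 1 ≠ 0 := hne 1 le_rfl
    have h0 : (b 0 : ℝ) - t 0 = 1 / t 1 := by have := hrel 0; linarith
    set q1 : ℚ := 1 / ((b 0 : ℚ) - q) with hq1def
    have hq1 : t 1 = (q1 : ℝ) := by
      have : t 1 = 1 / ((b 0 : ℝ) - t 0) := by rw [h0, one_div_one_div]
      rw [this, hq, hq1def]
      push_cast
      ring
    obtain ⟨g, g0, gs⟩ : ∃ g : ℕ → ℤ × ℤ, g 0 = (q1.num, (q1.den : ℤ)) ∧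
        ∀ k, g (k + 1) = ((g k).2, b (k + 1) * (g k).2 - (g k).1) :=
      ⟨fun n => Nat.rec (q1.num, (q1.den : ℤ)) (fun k p => (p.2, b (k + 1) * p.2 - p.1)) n,
        rfl, fun _ => rfl⟩
    have inv : ∀ k, (g k).2 ≠ 0 ∧ t (k + 1) = ((g k).1 : ℝ) / ((g k).2 : ℝ) := by
      intro k
      induction k with
      | zero =>
        refine ⟨by rw [g0]; show (q1.den : ℤ) ≠ 0; exact_mod_cast q1.den_nz, ?_⟩
        rw [g0]
        show t 1 = (q1.num : ℝ) / ((q1.den : ℤ) : ℝ)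
        rw [hq1, Rat.cast_def]
        push_cast
        ring
      | succ k ihk =>
        obtain ⟨hy, hxy⟩ := ihk
        have hyR : ((g k).2 : ℝ) ≠ 0 := Int.cast_ne_zero.mpr hy
        have htne : t (k + 2) ≠ 0 := hne (k + 2) (by omega)
        have hd : (b (k + 1) : ℝ) - t (k + 1) = 1 / t (k + 2) := by
          have := hrel (k + 1); linarith
        have hdne : (b (k + 1) : ℝ) - t (k + 1) ≠ 0 := by
          rw [hd]; exact one_div_ne_zero htne
        have hz : b (k + 1) * (g k).2 - (g k).1 ≠ 0 := by
          intro hz0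
          apply hdne
          have hc : (b (k + 1) : ℝ) * ((g k).2 : ℝ) - ((g k).1 : ℝ) = 0 := by
            exact_mod_cast congrArg (fun z : ℤ => (z : ℝ)) hz0
          rw [hxy]
          field_simp
          linarith
        refine ⟨by rw [gs]; exact hz, ?_⟩
        have ht2 : t (k + 2) = 1 / ((b (k + 1) : ℝ) - t (k + 1)) := by
          rw [hd, one_div_one_div]
        have hzR : ((b (k + 1) : ℝ) * ((g k).2 : ℝ) - ((g k).1 : ℝ)) ≠ 0 := by
          intro hc
          apply hz
          exact_mod_cast hc
        have hdne' : (b (k + 1) : ℝ) - ((g k).1 : ℝ) / ((g k).2 : ℝ) ≠ 0 := by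
          rw [← hxy]; exact hdne
        rw [gs]
        show t (k + 2) = _
        rw [ht2, hxy]
        push_cast
        rw [div_eq_div_iff hdne' hzR]
        field_simp
    have mono : ∀ k, (g (k + 1)).2.natAbs ≤ (g k).2.natAbs := by
      intro k
      obtain ⟨hy1, hv1⟩ := inv (k + 1)
      have h1 : 1 ≤ |t (k + 2)| := habs (k + 2) (by omega)
      rw [hv1, abs_div] at h1
      have hy1R : ((g (k + 1)).2 : ℝ) ≠ 0 := Int.cast_ne_zero.mpr hy1
      have hp : 0 < |((g (k + 1)).2 : ℝ)| := abs_pos.mpr hy1R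
      rw [le_div_iff₀ hp, one_mul] at h1
      have h3 : |(g (k + 1)).2| ≤ |(g (k + 1)).1| := by
        have := h1
        rw [← Int.cast_abs, ← Int.cast_abs] at this
        exact_mod_cast this
      have h4 : (g (k + 1)).1 = (g k).2 := by rw [gs]
      rw [h4] at h3
      rw [Int.abs_eq_natAbs, Int.abs_eq_natAbs] at h3
      exact_mod_cast h3
    obtain ⟨m, hm⟩ := nat_descent (fun k => (g k).2.natAbs) mono
    obtain ⟨hy1, hv1⟩ := inv (m + 1)
    have e1 : (g (m + 1)).1 = (g m).2 := by rw [gs]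
    have habs1 : |t (m + 2)| = 1 := by
      rw [hv1, abs_div]
      have hEq : |((g (m + 1)).1 : ℝ)| = |((g (m + 1)).2 : ℝ)| := by
        rw [e1, ← Int.cast_abs, ← Int.cast_abs, Int.abs_eq_natAbs, Int.abs_eq_natAbs]
        exact_mod_cast congrArg (fun z : ℕ => (z : ℝ)) hm.symm
      rw [hEq, div_self (abs_ne_zero.mpr (Int.cast_ne_zero.mpr hy1))]
    rcases (abs_eq (by norm_num : (0 : ℝ) ≤ 1)).mp habs1 with h1 | h1
    · left
      have allP : ∀ i, t (m + 2 + i) = 1 := by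
        intro i
        induction i with
        | zero => exact h1
        | succ i ih => exact (stepP (m + 2 + i) (by omega) ih).2
      exact ⟨m + 2, 0, fun k => by
        simpa using (stepP (m + 2 + k) (by omega) (allP k)).1⟩
    · right
      have allN : ∀ i, t (m + 2 + i) = -1 := by
        intro i
        induction i with
        | zero => exact h1
        | succ i ih => exact (stepN (m + 2 + i) (by omega) ih).2
      exact ⟨m + 2, 0, fun k => by
        simpa using (stepN (m + 2 + k) (by omega) (allN k)).1⟩
  · have down : ∀ r : ℕ, (∃ q0 : ℚ, t r = (q0 : ℝ)) → ∃ qq : ℚ, t 0 = (qq : ℝ) := by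
      intro r
      induction r with
      | zero => exact id
      | succ r ihr =>
        rintro ⟨q0, h0⟩
        apply ihr
        have hne' : t (r + 1) ≠ 0 := hne (r + 1) (by omega)
        have hq0 : q0 ≠ 0 := by
          intro h
          rw [h] at h0
          push_cast at h0
          exact hne' h0
        refine ⟨(b r : ℚ) - 1 / q0, ?_⟩
        rw [hrel r, h0]
        push_cast
        ring
    rintro (⟨r, s, hrs⟩ | ⟨r, s, hrs⟩)
    · have hshift : shf^[r] b = fun _ => (2 : ℤ) := funext fun k => by
        rw [shf_iter]; simpa using hrs k
      have htr : t r = 1 := tendsto_nhds_unique (hshift ▸ ht r) tendsto_const2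
      obtain ⟨qq, hqq⟩ := down r ⟨1, by rw [htr]; norm_num⟩
      exact ⟨qq, hqq⟩
    · have hshift : shf^[r] b = fun _ => (-2 : ℤ) := funext fun k => by
        rw [shf_iter]; simpa using hrs k
      have htr : t r = -1 := tendsto_nhds_unique (hshift ▸ ht r) tendsto_constm2
      obtain ⟨qq, hqq⟩ := down r ⟨-1, by rw [htr]; norm_num⟩
      exact ⟨qq, hqq⟩
end
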